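/- Let B ∈ ℝ^{r×n} and let S ⊆ ℝⁿ be a linear subspace. The following are equivalent: (i) the set of maps m(B) is injective with respect to S; (ii) 0 ∉ q(B)(S \ {0}); (iii) σ(ker(B)) ∩ σ(S \ {0}) = ∅, i.e. no nonzero vector of S has the same componentwise sign pattern as some vector of ker(B). -/

import Mathlib

/-- The positive orthant `ℝⁿ_{>0}`. -/
def posOrth (n : ℕ) : Set (Fin n → ℝ) := {x | ∀ i, 0 < x i}

/-- The generalized monomial map `μ_B : x ↦ x^B`, `(x^B)_j = ∏ᵢ xᵢ^{B j i}`. -/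
noncomputable def monMap {n r : ℕ} (B : Matrix (Fin r) (Fin n) ℝ) (x : Fin n → ℝ) :
    Fin r → ℝ :=
  fun j => ∏ i, x i ^ B j i

/-- `m(B) = {x ↦ κ ∗ x^B : κ ∈ ℝʳ_{>0}}`. -/
noncomputable def mSet {n r : ℕ} (B : Matrix (Fin r) (Fin n) ℝ) :
    Set ((Fin n → ℝ) → (Fin r → ℝ)) :=
  {G | ∃ κ : Fin r → ℝ, (∀ j, 0 < κ j) ∧ G = fun x => fun j => κ j * monMap B x j}

/-- `q(B) = {diag(κ) B diag(λ) : κ ∈ ℝʳ_{>0}, λ ∈ ℝⁿ_{>0}}`. -/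
def qSet {n r : ℕ} (B : Matrix (Fin r) (Fin n) ℝ) : Set (Matrix (Fin r) (Fin n) ℝ) :=
  {M | ∃ κ : Fin r → ℝ, ∃ lam : Fin n → ℝ, (∀ j, 0 < κ j) ∧ (∀ i, 0 < lam i) ∧
    M = Matrix.diagonal κ * B * Matrix.diagonal lam}

/-- `ℬ(T) = {M z : M ∈ ℬ, z ∈ T}`. -/
def matImage {n r : ℕ} (ℬ : Set (Matrix (Fin r) (Fin n) ℝ)) (T : Set (Fin n → ℝ)) :
    Set (Fin r → ℝ) :=
  {w | ∃ M ∈ ℬ, ∃ z ∈ T, w = M.mulVec z}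

/-- `𝒢` is injective with respect to `S`. -/
def InjOnCosets {n r : ℕ} (X : Set (Fin n → ℝ)) (S : Submodule ℝ (Fin n → ℝ))
    (𝒢 : Set ((Fin n → ℝ) → (Fin r → ℝ))) : Prop :=
  ∀ G ∈ 𝒢, ∀ x₀ ∈ X, Set.InjOn G ({z | z - x₀ ∈ S} ∩ X)

/-- `σ(T)`: the set of componentwise sign vectors of elements of `T`. -/
noncomputable def sgnSet {n : ℕ} (T : Set (Fin n → ℝ)) : Set (Fin n → SignType) :=
  (fun x i => SignType.sign (x i)) '' T

/-! ### Auxiliary material -/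

/-- The pivot condition: some positive rescaling of a nonzero vector of `S` lies in `ker B`. -/
def PivotCond {n r : ℕ} (B : Matrix (Fin r) (Fin n) ℝ) (S : Submodule ℝ (Fin n → ℝ)) : Prop :=
  ∃ lam : Fin n → ℝ, (∀ i, 0 < lam i) ∧
    ∃ z ∈ (S : Set (Fin n → ℝ)) \ {0}, B.mulVec (fun i => lam i * z i) = 0

lemma monMap_eq_exp {n r : ℕ} (B : Matrix (Fin r) (Fin n) ℝ) {x : Fin n → ℝ}
    (hx : ∀ i, 0 < x i) (j : Fin r) :
    monMap B x j = Real.exp (∑ i, B j i * Real.log (x i)) := by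
  rw [Real.exp_sum, monMap]
  exact Finset.prod_congr rfl fun i _ => by
    rw [Real.rpow_def_of_pos (hx i), mul_comm]

lemma monMap_eq_iff {n r : ℕ} (B : Matrix (Fin r) (Fin n) ℝ) {x y : Fin n → ℝ}
    (hx : ∀ i, 0 < x i) (hy : ∀ i, 0 < y i) :
    monMap B x = monMap B y ↔
      B.mulVec (fun i => Real.log (x i) - Real.log (y i)) = 0 := by
  rw [funext_iff, funext_iff]
  refine forall_congr' fun j => ?_
  rw [monMap_eq_exp B hx, monMap_eq_exp B hy, Real.exp_eq_exp]
  simp only [Matrix.mulVec, dotProduct, mul_sub, Finset.sum_sub_distrib, Pi.zero_apply]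
  constructor
  · intro h; rw [h]; ring
  · intro h; linarith

lemma qZero_iff_pivot {n r : ℕ} (B : Matrix (Fin r) (Fin n) ℝ) (S : Submodule ℝ (Fin n → ℝ)) :
    (0 : Fin r → ℝ) ∈ matImage (qSet B) ((S : Set (Fin n → ℝ)) \ {0}) ↔ PivotCond B S := by
  constructor
  · rintro ⟨M, ⟨κ, lam, hκ, hlam, rfl⟩, z, hz, h0⟩
    refine ⟨lam, hlam, z, hz, ?_⟩
    have hd : (Matrix.diagonal lam).mulVec z = fun i => lam i * z i := by
      ext i; simp [Matrix.mulVec_diagonal]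
    have h1 : (Matrix.diagonal κ).mulVec (B.mulVec (fun i => lam i * z i)) = 0 := by
      rw [← hd, Matrix.mulVec_mulVec, Matrix.mulVec_mulVec, ← h0]
    ext j
    have := congrFun h1 j
    simp only [Matrix.mulVec_diagonal, Pi.zero_apply] at this ⊢
    exact (mul_eq_zero.mp this).resolve_left (ne_of_gt (hκ j))
  · rintro ⟨lam, hlam, z, hz, hB⟩
    refine ⟨Matrix.diagonal 1 * B * Matrix.diagonal lam,
      ⟨1, lam, fun _ => one_pos, hlam, rfl⟩, z, hz, ?_⟩
    have hd : (Matrix.diagonal lam).mulVec z = fun i => lam i * z i := by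
      ext i; simp [Matrix.mulVec_diagonal]
    rw [← Matrix.mulVec_mulVec, ← Matrix.mulVec_mulVec, hd, hB]
    ext j; simp [Matrix.mulVec_diagonal]

lemma sgn_iff_pivot {n r : ℕ} (B : Matrix (Fin r) (Fin n) ℝ) (S : Submodule ℝ (Fin n → ℝ)) :
    (sgnSet {z | B.mulVec z = 0} ∩ sgnSet ((S : Set (Fin n → ℝ)) \ {0})).Nonempty ↔
      PivotCond B S := by
  constructor
  · rintro ⟨s, ⟨v, hv, hvs⟩, ⟨z, hz, hzs⟩⟩
    have hsgn : ∀ i, SignType.sign (v i) = SignType.sign (z i) := by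
      intro i
      have h1 := congrFun hvs i
      have h2 := congrFun hzs i
      simp only [] at h1 h2
      rw [h1, h2]
    refine ⟨fun i => if z i = 0 then 1 else v i / z i, fun i => ?_, z, hz, ?_⟩
    · by_cases h : z i = 0
      · simp [h]
      · simp only [h, if_false]
        have hs := hsgn i
        rcases lt_trichotomy (z i) 0 with hlt | heq | hgt
        · have : v i < 0 := by
            by_contra hv'
            push_neg at hv'
            rcases hv'.lt_or_eq with h1 | h1
            · rw [sign_pos h1, sign_neg hlt] at hs; exact absurd hs (by decide)
            · rw [← h1, sign_zero, sign_neg hlt] at hs; exact absurd hs (by decide)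
          exact div_pos_iff.mpr (Or.inr ⟨this, hlt⟩)
        · exact absurd heq h
        · have : 0 < v i := by
            by_contra hv'
            push_neg at hv'
            rcases hv'.lt_or_eq with h1 | h1
            · rw [sign_neg h1, sign_pos hgt] at hs; exact absurd hs (by decide)
            · rw [h1, sign_zero, sign_pos hgt] at hs; exact absurd hs (by decide)
          exact div_pos this hgt
    · have hvz : (fun i => (if z i = 0 then 1 else v i / z i) * z i) = v := by
        ext i
        by_cases h : z i = 0
        · have : v i = 0 := by
            have := hsgn i
            rw [h, sign_zero, sign_eq_zero_iff] at this
            exact this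
          simp [h, this]
        · simp [h, div_mul_cancel₀ _ h]
      rw [hvz]
      exact hv
  · rintro ⟨lam, hlam, z, hz, hB⟩
    refine ⟨fun i => SignType.sign (z i), ⟨fun i => lam i * z i, hB, ?_⟩, ⟨z, hz, rfl⟩⟩
    ext i
    show SignType.sign (lam i * z i) = SignType.sign (z i)
    rw [sign_mul, sign_pos (hlam i), one_mul]

lemma inj_iff_not_pivot {n r : ℕ} (B : Matrix (Fin r) (Fin n) ℝ) (S : Submodule ℝ (Fin n → ℝ)) :
    ¬ InjOnCosets (posOrth n) S (mSet B) ↔ PivotCond B S := by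
  constructor
  · intro h
    simp only [InjOnCosets, not_forall] at h
    obtain ⟨G, hG, x₀, hx₀, hninj⟩ := h
    rw [Set.InjOn] at hninj
    push_neg at hninj
    obtain ⟨x, hx, y, hy, hGxy, hxy⟩ := hninj
    obtain ⟨κ, hκ, rfl⟩ := hG
    have hxpos : ∀ i, 0 < x i := hx.2
    have hypos : ∀ i, 0 < y i := hy.2
    have hmon : monMap B x = monMap B y := by
      ext j
      have := congrFun hGxy j
      simp only at this
      exact mul_left_cancel₀ (ne_of_gt (hκ j)) this
    have hker := (monMap_eq_iff B hxpos hypos).mp hmon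
    refine ⟨fun i => if x i = y i then 1
        else (Real.log (x i) - Real.log (y i)) / (x i - y i), fun i => ?_, x - y, ⟨?_, ?_⟩, ?_⟩
    · by_cases h : x i = y i
      · simp [h]
      · simp only [h, if_false]
        rcases lt_or_gt_of_ne h with hlt | hgt
        · have hlog : Real.log (x i) < Real.log (y i) := Real.log_lt_log (hxpos i) hlt
          exact div_pos_iff.mpr (Or.inr ⟨by linarith, by linarith⟩)
        · have hlog : Real.log (y i) < Real.log (x i) := Real.log_lt_log (hypos i) hgt
          exact div_pos_iff.mpr (Or.inl ⟨by linarith, by linarith⟩)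
    · have : x - y = (x - x₀) - (y - x₀) := by ring_nf
      rw [this]
      exact S.sub_mem hx.1 hy.1
    · simp only [Set.mem_singleton_iff]
      intro h
      exact hxy (sub_eq_zero.mp h)
    · have heq : (fun i => (if x i = y i then 1
          else (Real.log (x i) - Real.log (y i)) / (x i - y i)) * (x - y) i)
          = fun i => Real.log (x i) - Real.log (y i) := by
        ext i
        by_cases h : x i = y i
        · simp [h, Pi.sub_apply]
        · have hne : x i - y i ≠ 0 := sub_ne_zero.mpr h
          simp only [h, if_false, Pi.sub_apply]
          rw [div_mul_cancel₀ _ hne]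
      rw [heq]
      exact hker
  · rintro ⟨lam, hlam, z, ⟨hzS, hz0⟩, hB⟩ hinj
    simp only [Set.mem_singleton_iff] at hz0
    set y : Fin n → ℝ := fun i =>
      if z i = 0 then 1 else z i / (Real.exp (lam i * z i) - 1) with hy_def
    set x : Fin n → ℝ := fun i => y i * Real.exp (lam i * z i) with hx_def
    have hypos : ∀ i, 0 < y i := by
      intro i
      by_cases h : z i = 0
      · simp [hy_def, h]
      · simp only [hy_def, h, if_false]
        rcases lt_or_gt_of_ne h with hlt | hgt
        · have ht : lam i * z i < 0 := mul_neg_of_pos_of_neg (hlam i) hlt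
          have : Real.exp (lam i * z i) < 1 := Real.exp_lt_one_iff.mpr ht
          exact div_pos_iff.mpr (Or.inr ⟨hlt, by linarith⟩)
        · have ht : 0 < lam i * z i := mul_pos (hlam i) hgt
          have : 1 < Real.exp (lam i * z i) := Real.one_lt_exp_iff.mpr ht
          exact div_pos hgt (by linarith)
    have hxpos : ∀ i, 0 < x i := fun i => mul_pos (hypos i) (Real.exp_pos _)
    have hxy : x - y = z := by
      ext i
      simp only [Pi.sub_apply, hx_def]
      by_cases h : z i = 0
      · simp [hy_def, h]
      · have ht : lam i * z i ≠ 0 := mul_ne_zero (ne_of_gt (hlam i)) h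
        have hne : Real.exp (lam i * z i) - 1 ≠ 0 := by
          intro hc
          have : Real.exp (lam i * z i) = 1 := by linarith
          exact ht (by simpa using this)
        simp only [hy_def, h, if_false]
        have key : ∀ a e : ℝ, e - 1 ≠ 0 → a / (e - 1) * e - a / (e - 1) = a := fun a e he => by
          rw [div_mul_eq_mul_div, div_sub_div_same, ← mul_sub_one, mul_div_assoc, div_self he, mul_one]
        exact key _ _ hne
    have hlog : ∀ i, Real.log (x i) - Real.log (y i) = lam i * z i := by
      intro i
      rw [hx_def]
      simp only
      rw [Real.log_mul (ne_of_gt (hypos i)) (ne_of_gt (Real.exp_pos _)), Real.log_exp]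
      ring
    have hmon : monMap B x = monMap B y := by
      rw [monMap_eq_iff B hxpos hypos]
      have : (fun i => Real.log (x i) - Real.log (y i)) = fun i => lam i * z i := by
        ext i; exact hlog i
      rw [this]
      exact hB
    have hGmem : (fun x => fun j => (1 : ℝ) * monMap B x j) ∈ mSet B :=
      ⟨fun _ => 1, fun _ => one_pos, rfl⟩
    have hymem : y ∈ posOrth n := hypos
    have hxmem : x ∈ ({w | w - y ∈ S} ∩ posOrth n) := by
      constructor
      · show x - y ∈ S
        rw [hxy]; exact hzS
      · exact hxpos
    have hymem' : y ∈ ({w | w - y ∈ S} ∩ posOrth n) := by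
      constructor
      · show y - y ∈ S
        simp
      · exact hypos
    have := hinj _ hGmem y hymem hxmem hymem' (by ext j; simp [hmon])
    apply hz0
    rw [← hxy, this, sub_self]

/-- `m(B)` is injective w.r.t. `S` iff `0 ∉ q(B)(S \ {0})` iff
`σ(ker B) ∩ σ(S \ {0}) = ∅`. -/
theorem stmt13 {n r : ℕ} (B : Matrix (Fin r) (Fin n) ℝ) (S : Submodule ℝ (Fin n → ℝ)) :
    (InjOnCosets (posOrth n) S (mSet B) ↔
      (0 : Fin r → ℝ) ∉ matImage (qSet B) ((S : Set (Fin n → ℝ)) \ {0})) ∧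
    ((0 : Fin r → ℝ) ∉ matImage (qSet B) ((S : Set (Fin n → ℝ)) \ {0}) ↔
      sgnSet {z | B.mulVec z = 0} ∩ sgnSet ((S : Set (Fin n → ℝ)) \ {0}) = ∅) := by
  constructor
  · rw [qZero_iff_pivot, ← inj_iff_not_pivot B S, not_not]
  · rw [qZero_iff_pivot, ← sgn_iff_pivot B S, ← Set.not_nonempty_iff_eq_empty]
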